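/- arXiv:1604.05896 — 3 statements merged into one kernel-verified Lean document; each statement's English description precedes it below -/
import Mathlib

section
/- Let B be a k×d random matrix with i.i.d. N(0,1) entries, a>0, P = a BᵀB. Then for all non-random u, v ∈ ℝᵈ, E[μ_{Pu} μ_{Pv}] = (a²k/d)·(u·v) + a²·k·(k+1)·μ_u μ_v. -/
open MeasureTheory ProbabilityTheory BigOperators Matrix

noncomputable def sampleMean {d : ℕ} (x : Fin d → ℝ) : ℝ := (∑ m, x m) / d

noncomputable def sampleCov {d : ℕ} (x y : Fin d → ℝ) : ℝ :=
  (∑ m, (x m - sampleMean x) * (y m - sampleMean y)) / ((d : ℝ) - 1)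

noncomputable def proj {k d : ℕ} (a : ℝ) (B : Matrix (Fin k) (Fin d) ℝ)
    (u : Fin d → ℝ) : Fin d → ℝ := a • (Bᵀ * B).mulVec u

open Real Filter

/-! ### Gaussian moments -/

noncomputable def Jg (n : ℕ) : ℝ := ∫ x : ℝ, x ^ n * Real.exp (-(2⁻¹ : ℝ) * x ^ 2)

lemma neg1_lt_cast (n : ℕ) : (-1 : ℝ) < (n : ℝ) := by
  have : (0:ℝ) ≤ n := Nat.cast_nonneg n
  linarith

lemma integrable_pow_gauss (n : ℕ) :
    Integrable (fun x : ℝ => x ^ n * Real.exp (-(2⁻¹ : ℝ) * x ^ 2)) := by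
  simpa [Real.rpow_natCast] using
    integrable_rpow_mul_exp_neg_mul_sq (b := 2⁻¹) (by norm_num) (neg1_lt_cast n)

lemma tendsto_pow_gauss_atTop (n : ℕ) :
    Tendsto (fun x : ℝ => x ^ n * Real.exp (-(2⁻¹ : ℝ) * x ^ 2)) atTop (nhds 0) := by
  have h := (rpow_mul_exp_neg_mul_sq_isLittleO_exp_neg (b := 2⁻¹) (by norm_num) (n : ℝ))
  have h2 : Tendsto (fun x : ℝ => rexp (-(1/2) * x)) atTop (nhds 0) := by
    apply Real.tendsto_exp_atBot.comp
    apply Tendsto.const_mul_atTop_of_neg (by norm_num) tendsto_id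
  have := h.trans_tendsto h2
  refine this.congr' ?_
  filter_upwards [eventually_gt_atTop (0:ℝ)] with x hx
  rw [Real.rpow_natCast]

lemma tendsto_pow_gauss_atBot (n : ℕ) :
    Tendsto (fun x : ℝ => x ^ n * Real.exp (-(2⁻¹ : ℝ) * x ^ 2)) atBot (nhds 0) := by
  have h := ((tendsto_pow_gauss_atTop n).comp tendsto_neg_atBot_atTop).const_mul ((-1:ℝ)^n)
  rw [mul_zero] at h
  refine h.congr fun x => ?_
  simp only [Function.comp]
  rw [neg_sq, ← mul_assoc, ← mul_pow]
  norm_num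

lemma hasDerivAt_gauss (m : ℕ) (x : ℝ) :
    HasDerivAt (fun x : ℝ => x ^ (m+1) * Real.exp (-(2⁻¹ : ℝ) * x ^ 2))
      (((m:ℝ)+1) * (x ^ m * Real.exp (-(2⁻¹ : ℝ) * x ^ 2))
        - x ^ (m+2) * Real.exp (-(2⁻¹ : ℝ) * x ^ 2)) x := by
  have h1 : HasDerivAt (fun x : ℝ => x ^ (m+1)) (((m:ℝ)+1) * x ^ m) x := by
    simpa using hasDerivAt_pow (m+1) x
  have h2 : HasDerivAt (fun x : ℝ => -(2⁻¹ : ℝ) * x ^ 2) (-x) x := by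
    have h := (hasDerivAt_pow 2 x).const_mul (-(2⁻¹ : ℝ))
    simpa using h.congr_deriv (by ring)
  have h3 : HasDerivAt (fun x : ℝ => Real.exp (-(2⁻¹ : ℝ) * x ^ 2))
      (Real.exp (-(2⁻¹ : ℝ) * x ^ 2) * (-x)) x := (Real.hasDerivAt_exp _).comp x h2
  have := h1.mul h3
  refine this.congr_deriv ?_
  ring

lemma Jg_rec (m : ℕ) : Jg (m + 2) = ((m:ℝ)+1) * Jg m := by
  have hint : Integrable (fun x : ℝ => ((m:ℝ)+1) * (x ^ m * Real.exp (-(2⁻¹ : ℝ) * x ^ 2))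
      - x ^ (m+2) * Real.exp (-(2⁻¹ : ℝ) * x ^ 2)) :=
    ((integrable_pow_gauss m).const_mul _).sub (integrable_pow_gauss (m+2))
  have h0 := integral_of_hasDerivAt_of_tendsto (hasDerivAt_gauss m) hint
    (tendsto_pow_gauss_atBot (m+1)) (tendsto_pow_gauss_atTop (m+1))
  rw [sub_zero] at h0
  rw [integral_sub ((integrable_pow_gauss m).const_mul _) (integrable_pow_gauss (m+2)),
    integral_const_mul] at h0
  have : ((m:ℝ)+1) * Jg m - Jg (m+2) = 0 := h0
  linarith

lemma Jg_zero : Jg 0 = Real.sqrt (2 * Real.pi) := by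
  have := integral_gaussian (2⁻¹ : ℝ)
  simp only [Jg, pow_zero, one_mul]
  rw [this]
  rw [show ((2:ℝ)*Real.pi) = Real.pi / 2⁻¹ by ring]

lemma Jg_one : Jg 1 = 0 := by
  have hd : ∀ x : ℝ, HasDerivAt (fun x : ℝ => Real.exp (-(2⁻¹ : ℝ) * x ^ 2))
      (-(x ^ 1 * Real.exp (-(2⁻¹ : ℝ) * x ^ 2))) x := by
    intro x
    have h2 : HasDerivAt (fun x : ℝ => -(2⁻¹ : ℝ) * x ^ 2) (-x) x := by
      have h := (hasDerivAt_pow 2 x).const_mul (-(2⁻¹ : ℝ))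
      simpa using h.congr_deriv (by ring)
    have := (Real.hasDerivAt_exp _).comp x h2
    exact this.congr_deriv (by ring)
  have hint : Integrable (fun x : ℝ => -(x ^ 1 * Real.exp (-(2⁻¹ : ℝ) * x ^ 2))) :=
    (integrable_pow_gauss 1).neg
  have htT : Tendsto (fun x : ℝ => Real.exp (-(2⁻¹ : ℝ) * x ^ 2)) atTop (nhds 0) :=
    (tendsto_pow_gauss_atTop 0).congr (by intro x; simp)
  have htB : Tendsto (fun x : ℝ => Real.exp (-(2⁻¹ : ℝ) * x ^ 2)) atBot (nhds 0) :=
    (tendsto_pow_gauss_atBot 0).congr (by intro x; simp)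
  have h0 := integral_of_hasDerivAt_of_tendsto hd hint htB htT
  rw [sub_zero, integral_neg] at h0
  have : -Jg 1 = 0 := h0
  linarith

open scoped ENNReal NNReal

lemma pdf_eq (x : ℝ) :
    gaussianPDFReal 0 1 x = (Real.sqrt (2 * Real.pi))⁻¹ * Real.exp (-(2⁻¹:ℝ) * x ^ 2) := by
  simp only [gaussianPDFReal, NNReal.coe_one, mul_one, sub_zero]
  rw [show -x^2/2 = -(2⁻¹:ℝ)*x^2 by ring]

lemma integrable_pow_gaussianReal (n : ℕ) :
    Integrable (fun x : ℝ => x ^ n) (gaussianReal 0 1) := by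
  rw [gaussianReal_of_var_ne_zero 0 one_ne_zero,
    integrable_withDensity_iff (measurable_gaussianPDF 0 1)
      (Filter.Eventually.of_forall (fun x => ENNReal.ofReal_lt_top))]
  have : (fun x : ℝ => x ^ n * (gaussianPDF 0 1 x).toReal)
      = fun x : ℝ => (Real.sqrt (2 * Real.pi))⁻¹ * (x ^ n * Real.exp (-(2⁻¹:ℝ) * x ^ 2)) := by
    ext x
    rw [gaussianPDF, ENNReal.toReal_ofReal (gaussianPDFReal_nonneg 0 1 x), pdf_eq]
    ring
  rw [this]
  exact (integrable_pow_gauss n).const_mul _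

noncomputable def gm (n : ℕ) : ℝ := ∫ x, x ^ n ∂(gaussianReal 0 1)

lemma gm_eq (n : ℕ) : gm n = (Real.sqrt (2 * Real.pi))⁻¹ * Jg n := by
  rw [gm, gaussianReal_of_var_ne_zero 0 one_ne_zero]
  have hpdf : (gaussianPDF 0 1) = fun x => ((gaussianPDFReal 0 1 x).toNNReal : ℝ≥0∞) := rfl
  rw [hpdf, integral_withDensity_eq_integral_smul
    ((measurable_gaussianPDFReal 0 1).real_toNNReal)]
  rw [show (fun x : ℝ => (gaussianPDFReal 0 1 x).toNNReal • x ^ n)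
      = fun x : ℝ => (Real.sqrt (2 * Real.pi))⁻¹ * (x ^ n * Real.exp (-(2⁻¹:ℝ) * x ^ 2)) from ?_,
    integral_const_mul]
  · rfl
  ext x
  rw [NNReal.smul_def, Real.coe_toNNReal _ (gaussianPDFReal_nonneg 0 1 x), pdf_eq, smul_eq_mul]
  ring

lemma sqrt_two_pi_ne : Real.sqrt (2 * Real.pi) ≠ 0 := by
  have : (0:ℝ) < 2 * Real.pi := by positivity
  positivity

lemma gm_one : gm 1 = 0 := by rw [gm_eq, Jg_one, mul_zero]
lemma gm_two : gm 2 = 1 := by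
  rw [gm_eq, show (2:ℕ) = 0 + 2 from rfl, Jg_rec, Jg_zero]
  rw [Nat.cast_zero]
  field_simp [sqrt_two_pi_ne]
  norm_num
lemma gm_three : gm 3 = 0 := by
  rw [gm_eq, show (3:ℕ) = 1 + 2 from rfl, Jg_rec, Jg_one]
  simp
lemma gm_four : gm 4 = 3 := by
  rw [gm_eq, show (4:ℕ) = 2 + 2 from rfl, Jg_rec, (Jg_rec 0 : Jg 2 = (((0:ℕ):ℝ)+1) * Jg 0), Jg_zero]
  rw [Nat.cast_zero, Nat.cast_two]
  field_simp [sqrt_two_pi_ne]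
  ring

/-! ### Independence -/

variable {Ω : Type} [MeasureSpace Ω] [IsProbabilityMeasure (ℙ : Measure Ω)]
  {ι : Type*} {X : ι → Ω → ℝ}

lemma prod_moment (hX : ∀ i, Measurable (X i))
    (hind : iIndepFun X ℙ) (n : ι → ℕ)
    (hint : ∀ i, Integrable (fun ω => X i ω ^ n i) ℙ) (s : Finset ι) :
    Integrable (fun ω => ∏ i ∈ s, X i ω ^ n i) ℙ ∧
      ∫ ω, ∏ i ∈ s, X i ω ^ n i = ∏ i ∈ s, ∫ ω, X i ω ^ n i := by
  classical
  set Y : ι → Ω → ℝ := fun i ω => X i ω ^ n i with hY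
  have hYmeas : ∀ i, Measurable (Y i) := fun i => (hX i).pow_const _
  have hYind : iIndepFun Y ℙ :=
    hind.comp (fun i x => x ^ n i) (fun i => measurable_id.pow_const _)
  induction s using Finset.induction_on with
  | empty => simpa using integrable_const (1:ℝ)
  | insert a s ha ih =>
    have hprod : (fun ω => ∏ i ∈ s, Y i ω) = ∏ i ∈ s, Y i := by
      ext ω; rw [Finset.prod_apply]
    have hIndep : IndepFun (∏ j ∈ s, Y j) (Y a) ℙ :=
      hYind.indepFun_finsetProd_of_notMem hYmeas ha
    have hint_s : Integrable (∏ i ∈ s, Y i) ℙ := hprod ▸ ih.1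
    have hint_ins : Integrable (fun ω => ∏ i ∈ insert a s, Y i ω) ℙ := by
      have := hIndep.symm.integrable_mul (hint a) hint_s
      refine this.congr (Filter.Eventually.of_forall fun ω => ?_)
      simp only [Finset.prod_insert ha, Pi.mul_apply, ← hprod]
    refine ⟨hint_ins, ?_⟩
    have hmul := hIndep.symm.integral_mul_eq_mul_integral (hint a).1 hint_s.1
    calc ∫ ω, ∏ i ∈ insert a s, Y i ω = ∫ ω, (Y a * ∏ i ∈ s, Y i) ω := by
          congr 1; ext ω; simp [Finset.prod_insert ha, ← hprod]
      _ = (∫ ω, Y a ω) * ∫ ω, (∏ i ∈ s, Y i) ω := hmul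
      _ = ∏ i ∈ insert a s, ∫ ω, Y i ω := by
          rw [Finset.prod_insert ha, ← ih.2, ← hprod]

lemma integ_pow (hX : ∀ i, Measurable (X i))
    (hlaw : ∀ i, Measure.map (X i) ℙ = gaussianReal 0 1) (i : ι) (n : ℕ) :
    Integrable (fun ω => X i ω ^ n) ℙ :=
  (integrable_map_measure (μ := ℙ) (f := X i) (g := fun x : ℝ => x ^ n)
    (by fun_prop) (hX i).aemeasurable).mp
    (by rw [hlaw i]; exact integrable_pow_gaussianReal n)

lemma moment_pow (hX : ∀ i, Measurable (X i))
    (hlaw : ∀ i, Measure.map (X i) ℙ = gaussianReal 0 1) (i : ι) (n : ℕ) :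
    ∫ ω, X i ω ^ n = gm n := by
  rw [gm, ← hlaw i, integral_map (hX i).aemeasurable (by fun_prop)]

lemma quad_eq_prod [DecidableEq ι] (p q r s : ι) (ω : Ω) :
    X p ω * X q ω * X r ω * X s ω =
      ∏ i ∈ ({p, q, r, s} : Multiset ι).toFinset,
        X i ω ^ Multiset.count i ({p, q, r, s} : Multiset ι) := by
  rw [← Finset.prod_multiset_map_count]
  simp [Multiset.insert_eq_cons, mul_assoc]

lemma comb {ι : Type*} [DecidableEq ι] (M : ℕ → ℝ) (h1 : M 1 = 0) (h2 : M 2 = 1)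
    (h3 : M 3 = 0) (h4 : M 4 = 3) (p q r s : ι) :
    ∏ i ∈ ({p, q, r, s} : Multiset ι).toFinset, M (Multiset.count i {p, q, r, s}) =
      (if p = q then (1:ℝ) else 0) * (if r = s then 1 else 0)
      + (if p = r then 1 else 0) * (if q = s then 1 else 0)
      + (if p = s then 1 else 0) * (if q = r then 1 else 0) := by
  by_cases hpq : p = q <;> by_cases hpr : p = r <;> by_cases hps : p = s <;>
    by_cases hqr : q = r <;> by_cases hqs : q = s <;> by_cases hrs : r = s <;>
    subst_vars <;>
    simp_all [Multiset.insert_eq_cons, Multiset.count_cons, Multiset.count_singleton,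
      Finset.prod_insert, Multiset.toFinset_cons, Multiset.toFinset_singleton, eq_comm] <;>
    norm_num

lemma quad_integrable [DecidableEq ι] (hX : ∀ i, Measurable (X i))
    (hind : iIndepFun X ℙ)
    (hlaw : ∀ i, Measure.map (X i) ℙ = gaussianReal 0 1) (p q r s : ι) :
    Integrable (fun ω => X p ω * X q ω * X r ω * X s ω) ℙ := by
  have h := (prod_moment hX hind (fun i => Multiset.count i ({p,q,r,s} : Multiset ι))
    (fun i => integ_pow hX hlaw i _) ({p,q,r,s} : Multiset ι).toFinset).1
  exact h.congr (Filter.Eventually.of_forall fun ω => (quad_eq_prod p q r s ω).symm)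

lemma quad_moment [DecidableEq ι] (hX : ∀ i, Measurable (X i))
    (hind : iIndepFun X ℙ)
    (hlaw : ∀ i, Measure.map (X i) ℙ = gaussianReal 0 1) (p q r s : ι) :
    ∫ ω, X p ω * X q ω * X r ω * X s ω =
      (if p = q then (1:ℝ) else 0) * (if r = s then 1 else 0)
      + (if p = r then 1 else 0) * (if q = s then 1 else 0)
      + (if p = s then 1 else 0) * (if q = r then 1 else 0) := by
  have h := (prod_moment hX hind (fun i => Multiset.count i ({p,q,r,s} : Multiset ι))
    (fun i => integ_pow hX hlaw i _) ({p,q,r,s} : Multiset ι).toFinset).2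
  calc ∫ ω, X p ω * X q ω * X r ω * X s ω
      = ∫ ω, ∏ i ∈ ({p,q,r,s} : Multiset ι).toFinset,
          X i ω ^ Multiset.count i ({p,q,r,s} : Multiset ι) := by
        congr 1; ext ω; exact quad_eq_prod p q r s ω
    _ = ∏ i ∈ ({p,q,r,s} : Multiset ι).toFinset, ∫ ω, X i ω ^ Multiset.count i ({p,q,r,s} : Multiset ι) := h
    _ = ∏ i ∈ ({p,q,r,s} : Multiset ι).toFinset, gm (Multiset.count i ({p,q,r,s} : Multiset ι)) := by
        refine Finset.prod_congr rfl fun i _ => moment_pow hX hlaw i _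
    _ = _ := comb gm gm_one gm_two gm_three gm_four p q r s

theorem stmt5
    {Ω : Type} [MeasureSpace Ω] [IsProbabilityMeasure (ℙ : Measure Ω)]
    {k d : ℕ} (hk : 1 ≤ k) (hd : 2 ≤ d)
    (B : Ω → Matrix (Fin k) (Fin d) ℝ)
    (hmeas : ∀ j m, Measurable fun ω => B ω j m)
    (hindep : iIndepFun
      (fun (p : Fin k × Fin d) ω => B ω p.1 p.2) ℙ)
    (hgauss : ∀ j m, Measure.map (fun ω => B ω j m) ℙ = gaussianReal 0 1)
    (a : ℝ) (ha : 0 < a) (u v : Fin d → ℝ) :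
    ∫ ω, sampleMean (proj a (B ω) u) * sampleMean (proj a (B ω) v)
      = a ^ 2 * k / d * (∑ n, u n * v n)
        + a ^ 2 * k * (k + 1) * (sampleMean u * sampleMean v) := by
  classical
  set X : Fin k × Fin d → Ω → ℝ := fun p ω => B ω p.1 p.2 with hXdef
  have hX : ∀ p, Measurable (X p) := fun p => hmeas p.1 p.2
  have hlaw : ∀ p, Measure.map (X p) ℙ = gaussianReal 0 1 := fun p => hgauss p.1 p.2
  have hd0 : (d:ℝ) ≠ 0 := Nat.cast_ne_zero.mpr (by omega)
  have hexp : ∀ (w : Fin d → ℝ) (ω : Ω), sampleMean (proj a (B ω) w)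
      = ∑ c : Fin d × Fin d × Fin k,
          a/d * (X (c.2.2, c.1) ω * X (c.2.2, c.2.1) ω * w c.2.1) := by
    intro w ω
    simp only [sampleMean, proj, Pi.smul_apply, smul_eq_mul, Matrix.mulVec, Matrix.mul_apply,
      dotProduct, Matrix.transpose_apply, Fintype.sum_prod_type]
    rw [Finset.sum_div]
    refine Finset.sum_congr rfl fun m _ => ?_
    rw [Finset.mul_sum, Finset.sum_div]
    refine Finset.sum_congr rfl fun n _ => ?_
    rw [Finset.sum_mul, Finset.mul_sum, Finset.sum_div]
    refine Finset.sum_congr rfl fun j _ => ?_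
    show a * (B ω j m * B ω j n * w n) / d = a / d * (B ω j m * B ω j n * w n)
    ring

  have hpt : (fun ω => sampleMean (proj a (B ω) u) * sampleMean (proj a (B ω) v))
      = fun ω => ∑ z : (Fin d × Fin d × Fin k) × (Fin d × Fin d × Fin k),
          (a/d * u z.1.2.1) * (a/d * v z.2.2.1) *
          (X (z.1.2.2, z.1.1) ω * X (z.1.2.2, z.1.2.1) ω *
            X (z.2.2.2, z.2.1) ω * X (z.2.2.2, z.2.2.1) ω) := by
    funext ω
    rw [hexp u ω, hexp v ω, Finset.sum_mul_sum]
    conv_rhs => rw [Fintype.sum_prod_type]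
    refine Finset.sum_congr rfl fun c _ => Finset.sum_congr rfl fun c' _ => ?_
    ring
  rw [hpt, integral_finset_sum _ (fun z _ =>
    (quad_integrable hX hindep hlaw _ _ _ _).const_mul _)]
  have hstep : ∀ z : (Fin d × Fin d × Fin k) × (Fin d × Fin d × Fin k),
      ∫ ω, (a/d * u z.1.2.1) * (a/d * v z.2.2.1) *
          (X (z.1.2.2, z.1.1) ω * X (z.1.2.2, z.1.2.1) ω *
            X (z.2.2.2, z.2.1) ω * X (z.2.2.2, z.2.2.1) ω)
      = (a/d * u z.1.2.1) * (a/d * v z.2.2.1) *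
        ((if (z.1.2.2, z.1.1) = (z.1.2.2, z.1.2.1) then (1:ℝ) else 0) *
          (if (z.2.2.2, z.2.1) = (z.2.2.2, z.2.2.1) then (1:ℝ) else 0)
        + (if (z.1.2.2, z.1.1) = (z.2.2.2, z.2.1) then (1:ℝ) else 0) *
          (if (z.1.2.2, z.1.2.1) = (z.2.2.2, z.2.2.1) then (1:ℝ) else 0)
        + (if (z.1.2.2, z.1.1) = (z.2.2.2, z.2.2.1) then (1:ℝ) else 0) *
          (if (z.1.2.2, z.1.2.1) = (z.2.2.2, z.2.1) then (1:ℝ) else 0)) := by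
    intro z
    rw [integral_const_mul, quad_moment hX hindep hlaw]
  rw [Finset.sum_congr rfl fun z _ => hstep z]
  simp only [Fintype.sum_prod_type, Prod.mk.injEq, ite_and, eq_self_iff_true, if_true,
    mul_ite, ite_mul, mul_zero, zero_mul, mul_one, one_mul, mul_add, add_mul,
    Finset.sum_add_distrib, Finset.sum_ite_eq, Finset.sum_ite_eq', Finset.mem_univ,
    if_true, Finset.sum_const, nsmul_eq_mul, Finset.card_univ, Fintype.card_fin]
  have hA : ∀ x x_1 : Fin d, (∑ x_2 : Fin d, if x = x_1 then (k:ℝ) * (a / d * u x_1 * (a / d * v x_2)) else 0)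
      = if x = x_1 then (k:ℝ) * (a/d * u x_1 * (a/d * ∑ x_2, v x_2)) else 0 := by
    intro x x1; by_cases h : x = x1 <;> simp [h, Finset.mul_sum]
  have hC : ∀ x x_1 : Fin d,
      (∑ x_2 : Fin d, ∑ x_3 : Fin d, if x_1 = x_2 then if x = x_3 then a / d * u x_1 * (a / d * v x_3) else 0 else 0)
      = a/d * u x_1 * (a/d * v x) := by
    intro x x1
    rw [Finset.sum_comm]
    simp
  simp only [hA, hC]
  simp only [Finset.sum_ite_eq, Finset.mem_univ, if_true, mul_ite, mul_zero]
  have e1 : ∑ x : Fin d, (k:ℝ) * ((k:ℝ) * (a / d * u x * (a / d * ∑ x_2 : Fin d, v x_2)))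
      = (k:ℝ)*(k:ℝ)*(a/d)*(a/d)*(∑ x, u x)*(∑ x, v x) := by
    rw [Finset.sum_congr rfl (fun x _ => show (k:ℝ) * ((k:ℝ) * (a / d * u x * (a / d * ∑ x_2 : Fin d, v x_2)))
      = ((k:ℝ)*(k:ℝ)*(a/d)*(a/d)*(∑ x_2 : Fin d, v x_2)) * u x from by ring), ← Finset.mul_sum]
    ring
  have e2 : (d:ℝ) * ∑ x : Fin d, (k:ℝ) * (a / d * u x * (a / d * v x))
      = (d:ℝ)*(k:ℝ)*(a/d)*(a/d)*(∑ x, u x * v x) := by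
    rw [Finset.sum_congr rfl (fun x _ => show (k:ℝ) * (a / d * u x * (a / d * v x))
      = ((k:ℝ)*(a/d)*(a/d)) * (u x * v x) from by ring), ← Finset.mul_sum]
    ring
  have e3 : ∑ x : Fin d, ∑ x_1 : Fin d, (k:ℝ) * (a / d * u x_1 * (a / d * v x))
      = (k:ℝ)*(a/d)*(a/d)*(∑ x, u x)*(∑ x, v x) := by
    rw [Finset.sum_congr rfl (fun x _ => show ∑ x_1 : Fin d, (k:ℝ) * (a / d * u x_1 * (a / d * v x))
      = ((k:ℝ)*(a/d)*(a/d)*(v x)) * ∑ x_1, u x_1 from by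
        rw [Finset.mul_sum]; exact Finset.sum_congr rfl fun x1 _ => by ring), ← Finset.sum_mul,
      ← Finset.mul_sum]
    ring
  rw [e1, e2, e3, sampleMean, sampleMean]
  field_simp
  ring
end

section
/- Let B_{jm} be i.i.d. real random variables with mean 0, variance c₂, and fourth cumulant c₄ (so E[B⁴] = 3c₂² + c₄). With P = a BᵀB, for all non-random u, v ∈ ℝᵈ and indices m, m′: Cov((Pu)_m, (Pv)_{m′}) = c₂² a² k ( 𝟙[m′=m](u·v) + u_{m′} v_m + b₄ 𝟙[m′=m] u_m v_m ), where b₄ = c₄/c₂². -/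
open MeasureTheory ProbabilityTheory BigOperators Matrix
open ENNReal

section Aux

variable {Ω : Type} [MeasureSpace Ω] [IsProbabilityMeasure (ℙ : Measure Ω)]

omit [IsProbabilityMeasure (ℙ : Measure Ω)] in
lemma aux_V {ι : Type*} (X : ι → Ω → ℝ) (c₂ : ℝ)
    (hvar : ∀ i, ∫ ω, (X i ω) ^ 2 = c₂) (i : ι) :
    ∫ ω, X i ω * X i ω = c₂ := by
  calc ∫ ω, X i ω * X i ω = ∫ ω, (X i ω) ^ 2 := by congr 1; funext ω; ring
  _ = c₂ := hvar i

lemma aux_moment2 {ι : Type*} [DecidableEq ι] (X : ι → Ω → ℝ)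
    (hmeas : ∀ i, Measurable (X i))
    (hindep : iIndepFun X ℙ)
    (c₂ : ℝ) (hmean : ∀ i, ∫ ω, X i ω = 0)
    (hvar : ∀ i, ∫ ω, (X i ω) ^ 2 = c₂) (i j : ι) :
    ∫ ω, X i ω * X j ω = if i = j then c₂ else 0 := by
  by_cases h : i = j
  · subst h; simp [aux_V X c₂ hvar i]
  · rw [if_neg h, (hindep.indepFun h).integral_fun_mul_eq_mul_integral (hmeas i).aestronglyMeasurable
      (hmeas j).aestronglyMeasurable, hmean i, zero_mul]

lemma aux_moment4 {ι : Type*} [DecidableEq ι] (X : ι → Ω → ℝ)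
    (hmeas : ∀ i, Measurable (X i))
    (hindep : iIndepFun X ℙ)
    (c₂ c₄ : ℝ) (hmean : ∀ i, ∫ ω, X i ω = 0)
    (hvar : ∀ i, ∫ ω, (X i ω) ^ 2 = c₂)
    (hfour : ∀ i, ∫ ω, (X i ω) ^ 4 = 3 * c₂ ^ 2 + c₄) (p q r s : ι) :
    ∫ ω, X p ω * X q ω * X r ω * X s ω =
      c₂ ^ 2 * ((if p = q then (1:ℝ) else 0) * (if r = s then 1 else 0)
        + (if p = r then 1 else 0) * (if q = s then 1 else 0)
        + (if p = s then 1 else 0) * (if q = r then 1 else 0))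
      + c₄ * (if p = q ∧ q = r ∧ r = s then 1 else 0) := by
  have hA : ∀ i, AEStronglyMeasurable (X i) ℙ := fun i => (hmeas i).aestronglyMeasurable
  have Z : ∀ (φ : Ω → ℝ) (t : ι), AEStronglyMeasurable φ ℙ → IndepFun φ (X t) ℙ →
      ∫ ω, φ ω * X t ω = 0 := fun φ t hφ h => by
    rw [h.integral_fun_mul_eq_mul_integral hφ (hA t), hmean t, mul_zero]
  have mcube : Measurable (fun x : ℝ => x * x * x) :=
    (measurable_id.mul measurable_id).mul measurable_id
  have I3 : ∀ i t : ι, i ≠ t → ∫ ω, (X i ω * X i ω * X i ω) * X t ω = 0 := fun i t h =>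
    Z _ t (((hA i).mul (hA i)).mul (hA i))
      (((hindep.indepFun h).comp mcube measurable_id :))
  have I21 : ∀ i j t : ι, i ≠ t → j ≠ t → ∫ ω, (X i ω * X i ω * X j ω) * X t ω = 0 :=
    fun i j t h1 h2 =>
    Z _ t (((hA i).mul (hA i)).mul (hA j))
      (((hindep.indepFun_prodMk hmeas i j t h1 h2).comp
        (measurable_fst.mul measurable_fst |>.mul measurable_snd) measurable_id :))
  have I22 : ∀ i j : ι, i ≠ j → ∫ ω, (X i ω * X i ω) * (X j ω * X j ω) = c₂ * c₂ :=
    fun i j h => by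
    have hi : IndepFun (fun ω => X i ω * X i ω) (fun ω => X j ω * X j ω) ℙ :=
      ((hindep.indepFun h).comp (measurable_id.mul measurable_id)
        (measurable_id.mul measurable_id) :)
    rw [hi.integral_fun_mul_eq_mul_integral ((hA i).mul (hA i)) ((hA j).mul (hA j)),
      aux_V X c₂ hvar i, aux_V X c₂ hvar j]
  have I11 : ∀ i j : ι, i ≠ j → ∫ ω, X i ω * X j ω = 0 := fun i j h => by
    rw [(hindep.indepFun h).integral_fun_mul_eq_mul_integral (hA i) (hA j), hmean i, zero_mul]
  have Imm : ∀ i j t w : ι, i ≠ t → i ≠ w → j ≠ t → j ≠ w →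
      ∫ ω, (X i ω * X j ω) * (X t ω * X w ω) = (∫ ω, X i ω * X j ω) * ∫ ω, X t ω * X w ω :=
    fun i j t w h1 h2 h3 h4 =>
    (hindep.indepFun_mul_mul hmeas i j t w h1 h2 h3 h4).integral_fun_mul_eq_mul_integral
      ((hA i).mul (hA j)) ((hA t).mul (hA w))
  have RW : ∀ (f g : Ω → ℝ), (∀ ω, f ω = g ω) → ∫ ω, f ω = ∫ ω, g ω := fun f g h => by
    congr 1; funext ω; exact h ω
  by_cases h1 : p = q
  · subst h1
    by_cases h2 : p = r
    · subst h2
      by_cases h3 : p = s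
      · subst h3
        rw [RW _ (fun ω => (X p ω) ^ 4) (fun ω => by ring), hfour p]
        simp; ring
      · rw [RW _ (fun ω => (X p ω * X p ω * X p ω) * X s ω) (fun ω => by ring), I3 p s h3]
        simp [h3]
    · by_cases h3 : r = s
      · subst h3
        rw [RW _ (fun ω => (X p ω * X p ω) * (X r ω * X r ω)) (fun ω => by ring), I22 p r h2]
        simp [h2]; ring
      · by_cases h4 : p = s
        · subst h4
          rw [RW _ (fun ω => (X p ω * X p ω * X p ω) * X r ω) (fun ω => by ring),
            I3 p r h2]
          simp [h2, Ne.symm h2, h3]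
        · rw [RW _ (fun ω => (X p ω * X p ω * X r ω) * X s ω) (fun ω => by ring),
            I21 p r s h4 h3]
          simp [h2, h3, h4]
  · by_cases h2 : p = r
    · subst h2
      by_cases h3 : q = s
      · subst h3
        rw [RW _ (fun ω => (X p ω * X p ω) * (X q ω * X q ω)) (fun ω => by ring), I22 p q h1]
        simp [h1, Ne.symm h1]; ring
      · by_cases h4 : p = s
        · subst h4
          rw [RW _ (fun ω => (X p ω * X p ω * X p ω) * X q ω) (fun ω => by ring),
            I3 p q h1]
          simp [h1, Ne.symm h1, h3]
        · rw [RW _ (fun ω => (X p ω * X p ω * X q ω) * X s ω) (fun ω => by ring),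
            I21 p q s h4 h3]
          simp [h1, h3, h4]
    · by_cases h3 : p = s
      · subst h3
        by_cases h4 : q = r
        · subst h4
          rw [RW _ (fun ω => (X p ω * X p ω) * (X q ω * X q ω)) (fun ω => by ring), I22 p q h1]
          simp [h1, Ne.symm h1]; ring
        · rw [RW _ (fun ω => (X p ω * X p ω * X q ω) * X r ω) (fun ω => by ring),
            I21 p q r h2 h4]
          simp [h1, h2, h4]
      · by_cases h4 : q = r
        · subst h4
          by_cases h5 : q = s
          · subst h5
            rw [RW _ (fun ω => (X q ω * X q ω * X q ω) * X p ω) (fun ω => by ring),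
              I3 q p (Ne.symm h1)]
            simp [h1, h3, Ne.symm h1]
          · rw [RW _ (fun ω => (X q ω * X q ω * X p ω) * X s ω) (fun ω => by ring),
              I21 q p s h5 h3]
            simp [h1, h3, h5]
        · by_cases h5 : q = s
          · subst h5
            rw [RW _ (fun ω => (X q ω * X q ω * X p ω) * X r ω) (fun ω => by ring),
              I21 q p r h4 h2]
            simp [h1, h2, h4]
          · by_cases h6 : r = s
            · subst h6
              rw [RW _ (fun ω => (X r ω * X r ω * X p ω) * X q ω) (fun ω => by ring),
                I21 r p q (Ne.symm h4) h1]
              simp [h1, h2, h4]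
            · rw [RW _ (fun ω => (X p ω * X q ω) * (X r ω * X s ω)) (fun ω => by ring),
                Imm p q r s h2 h3 h4 h5, I11 r s h6, mul_zero]
              simp [h1, h2, h3, h4, h5, h6]

end Aux

lemma pull_if {α : Type*} [Fintype α] (P : Prop) [Decidable P] (f : α → ℝ) :
    (∑ x : α, if P then f x else 0) = if P then ∑ x : α, f x else 0 := by
  split <;> simp

lemma dup_if (P : Prop) [Decidable P] (a b : ℝ) :
    (if P then (if P then a else b) else b) = if P then a else b := by
  split <;> simp_all

lemma final_sum {k d : ℕ} (c₂ c₄ a : ℝ) (hc₂ : c₂ ≠ 0) (u v : Fin d → ℝ) (m m' : Fin d) :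
    ∑ p : Fin k × Fin d, ∑ q : Fin k × Fin d,
      (a * u p.2) * (a * v q.2) *
        (c₂^2 * ((if (p.1, m) = p then (1:ℝ) else 0) * (if (q.1, m') = q then 1 else 0)
          + (if ((p.1, m) : Fin k × Fin d) = (q.1, m') then 1 else 0) * (if p = q then 1 else 0)
          + (if (p.1, m) = q then 1 else 0) * (if p = (q.1, m') then 1 else 0))
         + c₄ * (if (p.1, m) = p ∧ p = (q.1, m') ∧ ((q.1, m') : Fin k × Fin d) = q then 1 else 0))
    = c₂^2 * a^2 * k * ((if m' = m then (1:ℝ) else 0) * (∑ n, u n * v n) + u m' * v m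
        + (c₄/c₂^2) * (if m' = m then 1 else 0) * (u m * v m))
      + (a * c₂ * k * u m) * (a * c₂ * k * v m') := by
  simp only [Fintype.sum_prod_type, Prod.mk.injEq, eq_self_iff_true, true_and, and_true]
  simp only [ite_and, mul_ite, ite_mul, mul_zero, zero_mul, mul_one, one_mul,
    mul_add, add_mul, Finset.sum_add_distrib, pull_if, dup_if, Finset.sum_ite_eq,
    Finset.sum_ite_eq', Finset.mem_univ, if_true, Finset.sum_const, nsmul_eq_mul,
    Finset.card_univ, Fintype.card_fin, Finset.mul_sum, Finset.sum_mul]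
  by_cases hm : m' = m
  · subst hm
    simp only [if_pos rfl]
    rw [show (∑ i : Fin d, (k:ℝ) * (a * u i * (a * v i) * c₂ ^ 2))
        = ((k:ℝ)*a*a*c₂^2) * ∑ i, u i * v i from by
      rw [Finset.mul_sum]; exact Finset.sum_congr rfl fun i _ => by ring]
    rw [show (∑ i : Fin d, c₂ ^ 2 * a ^ 2 * (k:ℝ) * (u i * v i))
        = (c₂^2*a^2*(k:ℝ)) * ∑ i, u i * v i from (Finset.mul_sum _ _ _).symm]
    field_simp
    ring
  · simp only [if_neg hm, if_neg (fun h : m = m' => hm (h.symm))]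
    ring

theorem stmt18
    {Ω : Type} [MeasureSpace Ω] [IsProbabilityMeasure (ℙ : Measure Ω)]
    {k d : ℕ} (hk : 1 ≤ k) (hd : 2 ≤ d)
    (B : Ω → Matrix (Fin k) (Fin d) ℝ)
    (hmeas : ∀ j m, Measurable fun ω => B ω j m)
    (hindep : iIndepFun
      (fun (p : Fin k × Fin d) ω => B ω p.1 p.2) ℙ)
    (hident : ∀ j m j' m', IdentDistrib (fun ω => B ω j m) (fun ω => B ω j' m') ℙ ℙ)
    (hL4 : ∀ j m, MemLp (fun ω => B ω j m) 4 ℙ)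
    (c₂ c₄ : ℝ) (hc₂ : 0 < c₂)
    (hmean : ∀ j m, ∫ ω, B ω j m = 0)
    (hvar : ∀ j m, ∫ ω, (B ω j m) ^ 2 = c₂)
    (hfour : ∀ j m, ∫ ω, (B ω j m) ^ 4 = 3 * c₂ ^ 2 + c₄)
    (a : ℝ) (ha : 0 < a) (u v : Fin d → ℝ) (m m' : Fin d) :
    ∫ ω, (proj a (B ω) u m - ∫ ω', proj a (B ω') u m)
        * (proj a (B ω) v m' - ∫ ω', proj a (B ω') v m')
      = c₂ ^ 2 * a ^ 2 * k * ((if m' = m then (1 : ℝ) else 0) * (∑ n, u n * v n)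
          + u m' * v m
          + (c₄ / c₂ ^ 2) * (if m' = m then (1 : ℝ) else 0) * (u m * v m)) := by
  have hmeas' : ∀ i : Fin k × Fin d, Measurable fun ω => B ω i.1 i.2 :=
    fun i => hmeas i.1 i.2
  have hA : ∀ i : Fin k × Fin d, AEStronglyMeasurable (fun ω => B ω i.1 i.2) ℙ :=
    fun i => (hmeas' i).aestronglyMeasurable
  have hM2 : ∀ i j : Fin k × Fin d,
      ∫ ω, B ω i.1 i.2 * B ω j.1 j.2 = if i = j then c₂ else 0 :=
    fun i j => aux_moment2 (fun p ω => B ω p.1 p.2) hmeas' hindep c₂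
      (fun i => hmean i.1 i.2) (fun i => hvar i.1 i.2) i j
  have hM4 : ∀ p q r s : Fin k × Fin d,
      ∫ ω, B ω p.1 p.2 * B ω q.1 q.2 * B ω r.1 r.2 * B ω s.1 s.2 =
      c₂ ^ 2 * ((if p = q then (1:ℝ) else 0) * (if r = s then 1 else 0)
        + (if p = r then 1 else 0) * (if q = s then 1 else 0)
        + (if p = s then 1 else 0) * (if q = r then 1 else 0))
      + c₄ * (if p = q ∧ q = r ∧ r = s then 1 else 0) :=
    fun p q r s => aux_moment4 (fun p ω => B ω p.1 p.2) hmeas' hindep c₂ c₄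
      (fun i => hmean i.1 i.2) (fun i => hvar i.1 i.2) (fun i => hfour i.1 i.2) p q r s
  -- integrability
  have h2 : ∀ p q : Fin k × Fin d, MemLp (fun ω => B ω p.1 p.2 * B ω q.1 q.2) 2 ℙ :=
    fun p q => by
    have := (hL4 q.1 q.2).smul (hL4 p.1 p.2) (hpqr := (⟨by
      symm
      rw [← two_mul, show (4:ℝ≥0∞) = 2*2 by norm_num,
        ENNReal.mul_inv (by norm_num) (by norm_num), ← mul_assoc,
        ENNReal.mul_inv_cancel (by norm_num) (by norm_num), one_mul]⟩ :
      ENNReal.HolderTriple 4 4 2))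
    exact this
  have hInt2 : ∀ p q : Fin k × Fin d, Integrable (fun ω => B ω p.1 p.2 * B ω q.1 q.2) ℙ :=
    fun p q => (h2 p q).integrable (by norm_num)
  have hInt4 : ∀ p q r s : Fin k × Fin d,
      Integrable (fun ω => B ω p.1 p.2 * B ω q.1 q.2 * B ω r.1 r.2 * B ω s.1 s.2) ℙ :=
    fun p q r s => by
    have := (h2 r s).smul (h2 p q) (hpqr := (⟨by
      rw [inv_one, ENNReal.inv_two_add_inv_two]⟩ : ENNReal.HolderTriple 2 2 1))
    rw [← memLp_one_iff_integrable,
      show (fun ω => B ω p.1 p.2 * B ω q.1 q.2 * B ω r.1 r.2 * B ω s.1 s.2)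
        = fun ω => (B ω p.1 p.2 * B ω q.1 q.2) * (B ω r.1 r.2 * B ω s.1 s.2) from
        funext fun ω => by ring]
    exact this
  -- proj expansion
  have hproj : ∀ (w : Fin d → ℝ) (mm : Fin d) (ω : Ω), proj a (B ω) w mm
      = ∑ p : Fin k × Fin d, (a * w p.2) * (B ω p.1 mm * B ω p.1 p.2) := by
    intro w mm ω
    simp only [proj, Pi.smul_apply, smul_eq_mul, Matrix.mulVec, dotProduct,
      Matrix.mul_apply, Matrix.transpose_apply, Fintype.sum_prod_type]
    rw [Finset.mul_sum, Finset.sum_comm]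
    congr 1; funext j
    rw [Finset.sum_mul, Finset.mul_sum]
    exact Finset.sum_congr rfl fun x _ => by ring
  -- mean of proj
  have hmeanProj : ∀ (w : Fin d → ℝ) (mm : Fin d),
      ∫ ω, (∑ p : Fin k × Fin d, (a * w p.2) * (B ω p.1 mm * B ω p.1 p.2))
        = a * c₂ * k * w mm := by
    intro w mm
    rw [integral_finset_sum _ fun p _ => (hInt2 (p.1, mm) p).const_mul _]
    rw [Finset.sum_congr rfl fun p _ => by
      rw [integral_const_mul,
        show (∫ ω, B ω p.1 mm * B ω p.1 p.2)
          = if ((p.1, mm) : Fin k × Fin d) = p then c₂ else 0 from hM2 (p.1, mm) p]]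
    simp only [Fintype.sum_prod_type, Prod.mk.injEq, ite_and, mul_ite, ite_mul,
      mul_zero, zero_mul, mul_one, one_mul, pull_if, dup_if, Finset.sum_ite_eq,
      Finset.sum_ite_eq', Finset.mem_univ, if_true, Finset.sum_const, nsmul_eq_mul,
      Finset.card_univ, Fintype.card_fin]
    ring
  simp only [hproj]
  rw [hmeanProj u m, hmeanProj v m']
  -- integrable pieces
  have hIntF : Integrable
      (fun ω => ∑ p : Fin k × Fin d, (a * u p.2) * (B ω p.1 m * B ω p.1 p.2)) ℙ :=
    integrable_finset_sum _ fun p _ => (hInt2 (p.1, m) p).const_mul _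
  have hIntG : Integrable
      (fun ω => ∑ q : Fin k × Fin d, (a * v q.2) * (B ω q.1 m' * B ω q.1 q.2)) ℙ :=
    integrable_finset_sum _ fun q _ => (hInt2 (q.1, m') q).const_mul _
  have hterm : ∀ p q : Fin k × Fin d, Integrable
      (fun ω => ((a * u p.2) * (B ω p.1 m * B ω p.1 p.2))
        * ((a * v q.2) * (B ω q.1 m' * B ω q.1 q.2))) ℙ := fun p q => by
    have h := (hInt4 (p.1, m) p (q.1, m') q).const_mul ((a * u p.2) * (a * v q.2))
    exact h.congr (Filter.EventuallyEq.of_eq (funext fun ω => by ring))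
  have hFGsum : (fun ω => (∑ p : Fin k × Fin d, (a * u p.2) * (B ω p.1 m * B ω p.1 p.2))
      * (∑ q : Fin k × Fin d, (a * v q.2) * (B ω q.1 m' * B ω q.1 q.2)))
      = fun ω => ∑ p : Fin k × Fin d, ∑ q : Fin k × Fin d,
          ((a * u p.2) * (B ω p.1 m * B ω p.1 p.2))
            * ((a * v q.2) * (B ω q.1 m' * B ω q.1 q.2)) :=
    funext fun ω => Finset.sum_mul_sum _ _ _ _
  have hIntFG : Integrable
      (fun ω => (∑ p : Fin k × Fin d, (a * u p.2) * (B ω p.1 m * B ω p.1 p.2))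
        * (∑ q : Fin k × Fin d, (a * v q.2) * (B ω q.1 m' * B ω q.1 q.2))) ℙ := by
    rw [hFGsum]
    exact integrable_finset_sum _ fun p _ => integrable_finset_sum _ fun q _ => hterm p q
  -- value of ∫ F*G
  have hFG : ∫ ω, (∑ p : Fin k × Fin d, (a * u p.2) * (B ω p.1 m * B ω p.1 p.2))
      * (∑ q : Fin k × Fin d, (a * v q.2) * (B ω q.1 m' * B ω q.1 q.2))
      = c₂^2 * a^2 * k * ((if m' = m then (1:ℝ) else 0) * (∑ n, u n * v n) + u m' * v m
          + (c₄/c₂^2) * (if m' = m then 1 else 0) * (u m * v m))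
        + (a * c₂ * k * u m) * (a * c₂ * k * v m') := by
    rw [hFGsum, integral_finset_sum _ fun p _ =>
      integrable_finset_sum _ fun q _ => hterm p q]
    rw [Finset.sum_congr rfl fun p _ => integral_finset_sum _ fun q _ => hterm p q]
    rw [Finset.sum_congr rfl fun p _ => Finset.sum_congr rfl fun q _ => by
      rw [show (fun ω => ((a * u p.2) * (B ω p.1 m * B ω p.1 p.2))
            * ((a * v q.2) * (B ω q.1 m' * B ω q.1 q.2)))
          = fun ω => ((a * u p.2) * (a * v q.2))
            * (B ω p.1 m * B ω p.1 p.2 * B ω q.1 m' * B ω q.1 q.2) from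
          funext fun ω => by ring,
        integral_const_mul,
        show (∫ ω, B ω p.1 m * B ω p.1 p.2 * B ω q.1 m' * B ω q.1 q.2)
          = _ from hM4 (p.1, m) p (q.1, m') q]]
    exact final_sum c₂ c₄ a (ne_of_gt hc₂) u v m m'
  -- covariance expansion
  rw [show (fun ω => ((∑ p : Fin k × Fin d, (a * u p.2) * (B ω p.1 m * B ω p.1 p.2))
        - a * c₂ * ↑k * u m)
      * ((∑ q : Fin k × Fin d, (a * v q.2) * (B ω q.1 m' * B ω q.1 q.2))
        - a * c₂ * ↑k * v m'))
    = fun ω => (∑ p : Fin k × Fin d, (a * u p.2) * (B ω p.1 m * B ω p.1 p.2))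
        * (∑ q : Fin k × Fin d, (a * v q.2) * (B ω q.1 m' * B ω q.1 q.2))
      - ((a * c₂ * ↑k * u m) * (∑ q : Fin k × Fin d, (a * v q.2) * (B ω q.1 m' * B ω q.1 q.2))
        + ((a * c₂ * ↑k * v m') * (∑ p : Fin k × Fin d, (a * u p.2) * (B ω p.1 m * B ω p.1 p.2))
          - (a * c₂ * ↑k * u m) * (a * c₂ * ↑k * v m'))) from
    funext fun ω => by ring]
  have hR1 : Integrable (fun ω => (a * c₂ * (k:ℝ) * u m)
      * (∑ q : Fin k × Fin d, (a * v q.2) * (B ω q.1 m' * B ω q.1 q.2))) ℙ :=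
    hIntG.const_mul _
  have hR2 : Integrable (fun ω => (a * c₂ * (k:ℝ) * v m')
      * (∑ p : Fin k × Fin d, (a * u p.2) * (B ω p.1 m * B ω p.1 p.2))) ℙ :=
    hIntF.const_mul _
  have hR3 : Integrable (fun ω => (a * c₂ * (k:ℝ) * v m')
      * (∑ p : Fin k × Fin d, (a * u p.2) * (B ω p.1 m * B ω p.1 p.2))
      - (a * c₂ * (k:ℝ) * u m) * (a * c₂ * (k:ℝ) * v m')) ℙ :=
    hR2.sub (integrable_const _)
  have hR4 : Integrable (fun ω => (a * c₂ * (k:ℝ) * u m)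
      * (∑ q : Fin k × Fin d, (a * v q.2) * (B ω q.1 m' * B ω q.1 q.2))
      + ((a * c₂ * (k:ℝ) * v m')
        * (∑ p : Fin k × Fin d, (a * u p.2) * (B ω p.1 m * B ω p.1 p.2))
        - (a * c₂ * (k:ℝ) * u m) * (a * c₂ * (k:ℝ) * v m'))) ℙ :=
    hR1.add hR3
  rw [integral_sub hIntFG hR4, integral_add hR1 hR3, integral_sub hR2 (integrable_const _),
    integral_const_mul, integral_const_mul, integral_const,
    hmeanProj u m, hmeanProj v m', hFG]
  simp [measure_univ]
  ring
end

section
/- Let B_{jm} be i.i.d. real random variables with mean 0, variance c₂, and excess kurtosis b₄ = c₄/c₂², and P = a BᵀB. Then for non-random u, v ∈ ℝᵈ, E[C_{Pu,Pv}] = c₂² a² k [ (d+k) C_{u,v} + d μ_u μ_v + b₄ (1 − 1/d)( C_{u,v} + (d/(d−1)) μ_u μ_v ) ]; in particular, for μ_u = μ_v = 0, the choice a = (c₂² k (d + k + b₄(1−1/d)))^{−1/2} makes E[C_{Pu,Pv}] = C_{u,v}. -/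
open MeasureTheory ProbabilityTheory BigOperators Matrix

set_option linter.unusedSectionVars false
set_option maxHeartbeats 1000000

section AuxMoment

open ENNReal

lemma aux19_two_inv : (2:ℝ≥0∞)⁻¹ = 4⁻¹ + 4⁻¹ := by
  rw [← two_mul]
  rw [show (4:ℝ≥0∞) = 2*2 by norm_num, ENNReal.mul_inv (by norm_num) (by norm_num)]
  rw [← mul_assoc, ENNReal.mul_inv_cancel (by norm_num) (by norm_num), one_mul]

lemma aux19_one_inv : (1:ℝ≥0∞)⁻¹ = 2⁻¹ + 2⁻¹ := by
  rw [inv_one, ← two_mul, ENNReal.mul_inv_cancel (by norm_num) (by norm_num)]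

variable {Ω : Type} [MeasureSpace Ω] [IsProbabilityMeasure (ℙ : Measure Ω)]
  {ι : Type} [DecidableEq ι]

lemma aux19_memL2_mul (X : ι → Ω → ℝ) (hL4 : ∀ i, MemLp (X i) 4 ℙ) (i j : ι) :
    MemLp (fun ω => X i ω * X j ω) 2 ℙ := by
  have := (hL4 j).smul (hL4 i) (p := 4) (q := 4) (r := 2) (hpqr := ⟨aux19_two_inv.symm⟩)
  exact this

lemma aux19_int_mul4 (X : ι → Ω → ℝ) (hL4 : ∀ i, MemLp (X i) 4 ℙ) (i j p q : ι) :
    Integrable (fun ω => X i ω * X j ω * (X p ω * X q ω)) ℙ := by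
  have := (aux19_memL2_mul X hL4 p q).smul (aux19_memL2_mul X hL4 i j) (p := 2) (q := 2) (r := 1)
    (hpqr := ⟨aux19_one_inv.symm⟩)
  exact (this : MemLp _ 1 ℙ).integrable le_rfl

lemma aux19_int_mul3 (X : ι → Ω → ℝ) (hL4 : ∀ i, MemLp (X i) 4 ℙ) (i j p : ι) :
    Integrable (fun ω => X i ω * X j ω * X p ω) ℙ := by
  have h2 := aux19_memL2_mul X hL4 i j
  have h1 : MemLp (X p) 2 ℙ := (hL4 p).mono_exponent (by norm_num)
  have := h1.smul h2 (p := 2) (q := 2) (r := 1) (hpqr := ⟨aux19_one_inv.symm⟩)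
  exact (this : MemLp _ 1 ℙ).integrable le_rfl

lemma aux19_int_mul2 (X : ι → Ω → ℝ) (hL4 : ∀ i, MemLp (X i) 4 ℙ) (i j : ι) :
    Integrable (fun ω => X i ω * X j ω) ℙ :=
  (aux19_memL2_mul X hL4 i j).integrable (by norm_num)

lemma aux19_zero_single (X : ι → Ω → ℝ) (hmeas : ∀ i, Measurable (X i))
    (hindep : iIndepFun X ℙ)
    (hL4 : ∀ i, MemLp (X i) 4 ℙ)
    (hmean : ∀ i, ∫ ω, X i ω = 0)
    (p q r t : ι) (h1 : p ≠ t) (h2 : q ≠ t) (h3 : r ≠ t) :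
    ∫ ω, X p ω * X q ω * X r ω * X t ω = 0 := by
  have hp : p ∈ ({p, q, r} : Finset ι) := by simp
  have hq : q ∈ ({p, q, r} : Finset ι) := by simp
  have hr : r ∈ ({p, q, r} : Finset ι) := by simp
  have ht : t ∈ ({t} : Finset ι) := by simp
  have hdisj : Disjoint ({p, q, r} : Finset ι) {t} := by
    rw [Finset.disjoint_singleton_right]
    simp [Finset.mem_insert, Finset.mem_singleton, h1.symm, h2.symm, h3.symm]
  have hbig := hindep.indepFun_finset {p, q, r} {t} hdisj hmeas
  have hphi : Measurable (fun v : (i : ({p,q,r} : Finset ι)) → ℝ =>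
      v ⟨p, hp⟩ * v ⟨q, hq⟩ * v ⟨r, hr⟩) :=
    ((measurable_pi_apply (⟨p, hp⟩ : ({p,q,r} : Finset ι))).mul
      (measurable_pi_apply (⟨q, hq⟩ : ({p,q,r} : Finset ι)))).mul (measurable_pi_apply (⟨r, hr⟩ : ({p,q,r} : Finset ι)))
  have hpsi : Measurable (fun v : (i : ({t} : Finset ι)) → ℝ => v ⟨t, ht⟩) :=
    measurable_pi_apply (⟨t, ht⟩ : ({t} : Finset ι))
  have hind : IndepFun (fun ω => X p ω * X q ω * X r ω) (X t) ℙ := hbig.comp hphi hpsi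
  have := hind.integral_mul_eq_mul_integral (aux19_int_mul3 X hL4 p q r).aestronglyMeasurable
    ((hL4 t).integrable (by norm_num)).aestronglyMeasurable
  calc ∫ ω, X p ω * X q ω * X r ω * X t ω
      = ∫ ω, (fun ω => X p ω * X q ω * X r ω) ω * X t ω := rfl
    _ = (∫ ω, X p ω * X q ω * X r ω) * ∫ ω, X t ω := this
    _ = 0 := by rw [hmean t]; ring

lemma aux19_sq_sq (X : ι → Ω → ℝ) (hmeas : ∀ i, Measurable (X i))
    (hindep : iIndepFun X ℙ)
    (hL4 : ∀ i, MemLp (X i) 4 ℙ) (c₂ : ℝ)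
    (hvar : ∀ i, ∫ ω, (X i ω)^2 = c₂)
    (p r : ι) (hpr : p ≠ r) :
    ∫ ω, (X p ω * X p ω) * (X r ω * X r ω) = c₂ * c₂ := by
  have hind : IndepFun (fun ω => X p ω * X p ω) (fun ω => X r ω * X r ω) ℙ :=
    hindep.indepFun_mul_mul hmeas p p r r hpr hpr hpr hpr
  have := hind.integral_mul_eq_mul_integral (aux19_int_mul2 X hL4 p p).aestronglyMeasurable (aux19_int_mul2 X hL4 r r).aestronglyMeasurable
  have h2 : ∀ i, ∫ ω, X i ω * X i ω = c₂ := by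
    intro i
    rw [← hvar i]; congr 1; funext ω; ring
  calc ∫ ω, (X p ω * X p ω) * (X r ω * X r ω)
      = (∫ ω, X p ω * X p ω) * ∫ ω, X r ω * X r ω := this
    _ = c₂ * c₂ := by rw [h2, h2]

lemma aux19_fourMoment (X : ι → Ω → ℝ) (hmeas : ∀ i, Measurable (X i))
    (hindep : iIndepFun X ℙ)
    (hL4 : ∀ i, MemLp (X i) 4 ℙ)
    (c₂ c₄ : ℝ) (hmean : ∀ i, ∫ ω, X i ω = 0)
    (hvar : ∀ i, ∫ ω, (X i ω)^2 = c₂) (hfour : ∀ i, ∫ ω, (X i ω)^4 = 3*c₂^2+c₄)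
    (p q r s : ι) :
    ∫ ω, X p ω * X q ω * X r ω * X s ω =
      c₂^2 * ((if p = q then 1 else 0) * (if r = s then 1 else 0)
        + (if p = r then 1 else 0) * (if q = s then 1 else 0)
        + (if p = s then 1 else 0) * (if q = r then 1 else 0))
      + c₄ * ((if p = q then 1 else 0) * (if p = r then 1 else 0) * (if p = s then 1 else 0)) := by
  have Z := aux19_zero_single X hmeas hindep hL4 hmean
  have SQ := aux19_sq_sq X hmeas hindep hL4 c₂ hvar
  by_cases hpq : p = q
  · subst hpq
    by_cases hrs : r = s
    · subst hrs
      by_cases hpr : p = r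
      · subst hpr
        rw [show (fun ω => X p ω * X p ω * X p ω * X p ω) = fun ω => (X p ω)^4
            from funext fun ω => by ring, hfour p]
        simp; ring
      · rw [show (fun ω => X p ω * X p ω * X r ω * X r ω)
            = fun ω => (X p ω * X p ω) * (X r ω * X r ω) from funext fun ω => by ring,
          SQ p r hpr]
        simp [hpr]; ring
    · by_cases hpr : p = r
      · subst hpr
        rw [show (fun ω => X p ω * X p ω * X p ω * X s ω)
            = fun ω => X p ω * X p ω * X p ω * X s ω from rfl,
          Z p p p s hrs hrs hrs]
        simp [hrs]
      · by_cases hps : p = s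
        · subst hps
          rw [show (fun ω => X p ω * X p ω * X r ω * X p ω)
              = fun ω => X p ω * X p ω * X p ω * X r ω from funext fun ω => by ring,
            Z p p p r hpr hpr hpr]
          simp [hpr, hrs, Ne.symm hpr]
        · rw [Z p p r s hps hps hrs]
          simp [hps, hrs, hpr]
  · by_cases hrs : r = s
    · subst hrs
      by_cases hpr : p = r
      · subst hpr
        rw [show (fun ω => X p ω * X q ω * X p ω * X p ω)
            = fun ω => X p ω * X p ω * X p ω * X q ω from funext fun ω => by ring,
          Z p p p q hpq hpq hpq]
        simp [hpq, Ne.symm hpq]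
      · by_cases hqr : q = r
        · subst hqr
          rw [show (fun ω => X p ω * X q ω * X q ω * X q ω)
              = fun ω => X q ω * X q ω * X q ω * X p ω from funext fun ω => by ring,
            Z q q q p (Ne.symm hpq) (Ne.symm hpq) (Ne.symm hpq)]
          simp [hpq, hpr]
        · rw [show (fun ω => X p ω * X q ω * X r ω * X r ω)
              = fun ω => X q ω * X r ω * X r ω * X p ω from funext fun ω => by ring,
            Z q r r p (Ne.symm hpq) (Ne.symm hpr) (Ne.symm hpr)]
          simp [hpq, hpr, hqr]
    · by_cases hpr : p = r
      · subst hpr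
        by_cases hqs : q = s
        · subst hqs
          rw [show (fun ω => X p ω * X q ω * X p ω * X q ω)
              = fun ω => (X p ω * X p ω) * (X q ω * X q ω) from funext fun ω => by ring,
            SQ p q hpq]
          simp [hpq]; ring
        · rw [Z p q p s hrs hqs hrs]
          simp [hpq, hrs, hqs]
      · by_cases hps : p = s
        · subst hps
          by_cases hqr : q = r
          · subst hqr
            rw [show (fun ω => X p ω * X q ω * X q ω * X p ω)
                = fun ω => (X p ω * X p ω) * (X q ω * X q ω) from funext fun ω => by ring,
              SQ p q hpq]
            simp [hpq, hpr, Ne.symm hpq, Ne.symm hpr]; ring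
          · rw [show (fun ω => X p ω * X q ω * X r ω * X p ω)
                = fun ω => X p ω * X r ω * X p ω * X q ω from funext fun ω => by ring,
              Z p r p q hpq (Ne.symm hqr) hpq]
            simp [hpq, hpr, hqr, hrs]
        · by_cases hqr : q = r
          · subst hqr
            rw [show (fun ω => X p ω * X q ω * X q ω * X s ω)
                = fun ω => X q ω * X q ω * X s ω * X p ω from funext fun ω => by ring,
              Z q q s p (Ne.symm hpq) (Ne.symm hpq) (Ne.symm hps)]
            simp [hpq, hpr, hps, hrs]
          · by_cases hqs : q = s
            · subst hqs
              rw [show (fun ω => X p ω * X q ω * X r ω * X q ω)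
                  = fun ω => X q ω * X r ω * X q ω * X p ω from funext fun ω => by ring,
                Z q r q p (Ne.symm hpq) (Ne.symm hpr) (Ne.symm hpq)]
              simp [hpq, hpr, hps, hqr]
            · rw [Z p q r s hps hqs hrs]
              simp [hpq, hpr, hps, hqr, hqs, hrs]

end AuxMoment

lemma aux19_proj_apply {k d : ℕ} (a : ℝ) (B : Matrix (Fin k) (Fin d) ℝ) (w : Fin d → ℝ) (m : Fin d) :
    proj a B w m = ∑ p : Fin k × Fin d, B p.1 m * B p.1 p.2 * (a * w p.2) := by
  simp only [proj, Pi.smul_apply, smul_eq_mul, Matrix.mulVec, Matrix.mul_apply,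
    Matrix.transpose_apply, dotProduct, Fintype.sum_prod_type]
  calc a * ∑ n, (∑ j, B j m * B j n) * w n
      = ∑ n, ∑ j, B j m * B j n * (a * w n) := by
        rw [Finset.mul_sum]
        exact Finset.sum_congr rfl fun n _ => by
          rw [Finset.sum_mul, Finset.mul_sum]
          exact Finset.sum_congr rfl fun j _ => by ring
    _ = ∑ j, ∑ n, B j m * B j n * (a * w n) := Finset.sum_comm

lemma aux19_sampleCov_eq {d : ℕ} (hd : (d:ℝ) ≠ 0) (hd1 : (d:ℝ) - 1 ≠ 0) (x y : Fin d → ℝ) :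
    sampleCov x y = (1/((d:ℝ)-1)) * (∑ m, x m * y m)
      - (1/(((d:ℝ)-1)*d)) * ((∑ m, x m) * (∑ m, y m)) := by
  unfold sampleCov sampleMean
  have hexp : ∑ m, (x m - (∑ i, x i)/(d:ℝ)) * (y m - (∑ i, y i)/(d:ℝ))
      = (∑ m, x m * y m) - ((∑ i, x i) * (∑ i, y i))/(d:ℝ) := by
    have h : ∀ m : Fin d, (x m - (∑ i, x i)/(d:ℝ)) * (y m - (∑ i, y i)/(d:ℝ))
        = x m * y m - ((∑ i, x i)/(d:ℝ)) * y m - ((∑ i, y i)/(d:ℝ)) * x m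
          + ((∑ i, x i)/(d:ℝ)) * ((∑ i, y i)/(d:ℝ)) := fun m => by ring
    rw [Finset.sum_congr rfl fun m _ => h m]
    rw [Finset.sum_add_distrib, Finset.sum_sub_distrib, Finset.sum_sub_distrib,
      ← Finset.mul_sum, ← Finset.mul_sum, Finset.sum_const, Finset.card_univ,
      Fintype.card_fin, nsmul_eq_mul]
    field_simp
    ring
  rw [hexp]
  field_simp

lemma aux19_sumA {k d : ℕ} (a c₂ c₄ : ℝ) (u v : Fin d → ℝ) :
    ∑ m : Fin d, ∑ p : Fin k × Fin d, ∑ p' : Fin k × Fin d,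
      (a * u p.2 * (a * v p'.2)) *
        (c₂^2 * ((if ((p.1, m) : Fin k × Fin d) = p then (1:ℝ) else 0) * (if ((p'.1, m) : Fin k × Fin d) = p' then 1 else 0)
          + (if ((p.1, m) : Fin k × Fin d) = (p'.1, m) then (1:ℝ) else 0) * (if p = p' then 1 else 0)
          + (if ((p.1, m) : Fin k × Fin d) = p' then (1:ℝ) else 0) * (if p = ((p'.1, m) : Fin k × Fin d) then 1 else 0))
        + c₄ * ((if ((p.1,m) : Fin k × Fin d) = p then (1:ℝ) else 0) * (if ((p.1,m) : Fin k × Fin d) = (p'.1, m) then 1 else 0) * (if ((p.1,m):Fin k × Fin d) = p' then 1 else 0)))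
    = a^2 * ((c₂^2*((k:ℝ)^2 + k*d + k) + c₄*k) * (∑ n, u n * v n)) := by
  simp only [Prod.ext_iff, Prod.mk.injEq, eq_self_iff_true, true_and, and_true, ite_and,
    mul_ite, ite_mul, mul_zero, zero_mul, mul_one, one_mul, mul_add, add_mul,
    Finset.sum_add_distrib, Finset.sum_ite_eq, Finset.sum_ite_eq', Finset.sum_ite_irrel,
    Finset.sum_const_zero, Finset.mem_univ, if_true,
    Finset.sum_const, Finset.card_univ, Fintype.card_fin, nsmul_eq_mul, Finset.mul_sum, Finset.sum_mul]
  simp only [Fintype.sum_prod_type, Prod.mk.injEq, eq_self_iff_true, true_and, and_true, ite_and,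
    mul_ite, ite_mul, mul_zero, zero_mul, mul_one, one_mul, mul_add, add_mul,
    Finset.sum_add_distrib, Finset.sum_ite_eq, Finset.sum_ite_eq', Finset.sum_ite_irrel,
    Finset.sum_const_zero, Finset.mem_univ, if_true,
    Finset.sum_const, Finset.card_univ, Fintype.card_fin, nsmul_eq_mul, Finset.mul_sum, Finset.sum_mul]
  rw [← Finset.sum_add_distrib, ← Finset.sum_add_distrib, ← Finset.sum_add_distrib,
    ← Finset.sum_add_distrib, ← Finset.sum_add_distrib, ← Finset.sum_add_distrib]
  exact Finset.sum_congr rfl fun x _ => by ring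

lemma aux19_sumB {k d : ℕ} (a c₂ c₄ : ℝ) (u v : Fin d → ℝ) :
    ∑ m : Fin d, ∑ m' : Fin d, ∑ p : Fin k × Fin d, ∑ p' : Fin k × Fin d,
      (a * u p.2 * (a * v p'.2)) *
        (c₂^2 * ((if ((p.1, m) : Fin k × Fin d) = p then (1:ℝ) else 0) * (if ((p'.1, m') : Fin k × Fin d) = p' then 1 else 0)
          + (if ((p.1, m) : Fin k × Fin d) = (p'.1, m') then (1:ℝ) else 0) * (if p = p' then 1 else 0)
          + (if ((p.1, m) : Fin k × Fin d) = p' then (1:ℝ) else 0) * (if p = ((p'.1, m') : Fin k × Fin d) then 1 else 0))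
        + c₄ * ((if ((p.1,m) : Fin k × Fin d) = p then (1:ℝ) else 0) * (if ((p.1,m) : Fin k × Fin d) = (p'.1, m') then 1 else 0) * (if ((p.1,m):Fin k × Fin d) = p' then 1 else 0)))
    = a^2 * (c₂^2*((k:ℝ)^2 + k) * ((∑ n, u n) * (∑ n, v n)) + (c₂^2*k*d + c₄*k) * (∑ n, u n * v n)) := by
  simp only [Prod.ext_iff, Prod.mk.injEq, eq_self_iff_true, true_and, and_true, ite_and,
    mul_ite, ite_mul, mul_zero, zero_mul, mul_one, one_mul, mul_add, add_mul,
    Finset.sum_add_distrib, Finset.sum_ite_eq, Finset.sum_ite_eq', Finset.sum_ite_irrel,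
    Finset.sum_const_zero, Finset.mem_univ, if_true,
    Finset.sum_const, Finset.card_univ, Fintype.card_fin, nsmul_eq_mul, Finset.mul_sum, Finset.sum_mul]
  simp only [Fintype.sum_prod_type, Prod.mk.injEq, eq_self_iff_true, true_and, and_true, ite_and,
    mul_ite, ite_mul, mul_zero, zero_mul, mul_one, one_mul, mul_add, add_mul,
    Finset.sum_add_distrib, Finset.sum_ite_eq, Finset.sum_ite_eq', Finset.sum_ite_irrel,
    Finset.sum_const_zero, Finset.mem_univ, if_true,
    Finset.sum_const, Finset.card_univ, Fintype.card_fin, nsmul_eq_mul, Finset.mul_sum, Finset.sum_mul]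
  have h2 : ∀ c : ℝ, (∑ x : Fin d, ∑ y : Fin d, c * (u x * v y)) = c * ((∑ n, u n) * (∑ n, v n)) := by
    intro c
    rw [Finset.sum_mul_sum, Finset.mul_sum]
    exact Finset.sum_congr rfl fun x _ => by rw [Finset.mul_sum]
  have L1 : ∑ x : Fin d, ∑ x_1 : Fin d, (k:ℝ) * ((k:ℝ) * (a * u x * (a * v x_1) * c₂ ^ 2))
      = ((k:ℝ)*(k:ℝ)*a*a*c₂^2) * ((∑ n, u n) * (∑ n, v n)) := by
    rw [← h2]; exact Finset.sum_congr rfl fun x _ => Finset.sum_congr rfl fun y _ => by ring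
  have L3 : ∑ x : Fin d, ∑ x_1 : Fin d, (k:ℝ) * (a * u x_1 * (a * v x) * c₂ ^ 2)
      = ((k:ℝ)*a*a*c₂^2) * ((∑ n, u n) * (∑ n, v n)) := by
    rw [Finset.sum_comm, ← h2]
    exact Finset.sum_congr rfl fun x _ => Finset.sum_congr rfl fun y _ => by ring
  have R1 : ∑ x : Fin d, ∑ i : Fin d, a ^ 2 * (c₂ ^ 2 * (k:ℝ) ^ 2 * (u i * v x))
      = (a^2*c₂^2*(k:ℝ)^2) * ((∑ n, u n) * (∑ n, v n)) := by
    rw [Finset.sum_comm, ← h2]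
    exact Finset.sum_congr rfl fun x _ => Finset.sum_congr rfl fun y _ => by ring
  have R2 : ∑ x : Fin d, ∑ i : Fin d, a ^ 2 * (c₂ ^ 2 * (k:ℝ) * (u i * v x))
      = (a^2*c₂^2*(k:ℝ)) * ((∑ n, u n) * (∑ n, v n)) := by
    rw [Finset.sum_comm, ← h2]
    exact Finset.sum_congr rfl fun x _ => Finset.sum_congr rfl fun y _ => by ring
  rw [L1, L3, R1, R2]
  have hs : ∀ (F : Fin d → ℝ) (c : ℝ), (∀ i, F i = c * (u i * v i)) →
      (∑ i, F i) = c * ∑ n, u n * v n := fun F c h => by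
    rw [Finset.sum_congr rfl fun i _ => h i, ← Finset.mul_sum]
  rw [hs (fun i => (d:ℝ) * ((k:ℝ) * (a * u i * (a * v i) * c₂ ^ 2))) ((d:ℝ)*(k:ℝ)*a*a*c₂^2) (fun i => by ring),
    hs (fun i => (k:ℝ) * (a * u i * (a * v i) * c₄)) ((k:ℝ)*a*a*c₄) (fun i => by ring),
    hs (fun i => a ^ 2 * (c₂ ^ 2 * (k:ℝ) * (d:ℝ) * (u i * v i))) (a^2*c₂^2*(k:ℝ)*(d:ℝ)) (fun i => by ring),
    hs (fun i => a ^ 2 * (c₄ * (k:ℝ) * (u i * v i))) (a^2*c₄*(k:ℝ)) (fun i => by ring)]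
  ring

theorem stmt19
    {Ω : Type} [MeasureSpace Ω] [IsProbabilityMeasure (ℙ : Measure Ω)]
    {k d : ℕ} (hk : 1 ≤ k) (hd : 2 ≤ d)
    (B : Ω → Matrix (Fin k) (Fin d) ℝ)
    (hmeas : ∀ j m, Measurable fun ω => B ω j m)
    (hindep : iIndepFun
      (fun (p : Fin k × Fin d) ω => B ω p.1 p.2) ℙ)
    (hident : ∀ j m j' m', IdentDistrib (fun ω => B ω j m) (fun ω => B ω j' m') ℙ ℙ)
    (hL4 : ∀ j m, MemLp (fun ω => B ω j m) 4 ℙ)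
    (c₂ c₄ : ℝ) (hc₂ : 0 < c₂)
    (hmean : ∀ j m, ∫ ω, B ω j m = 0)
    (hvar : ∀ j m, ∫ ω, (B ω j m) ^ 2 = c₂)
    (hfour : ∀ j m, ∫ ω, (B ω j m) ^ 4 = 3 * c₂ ^ 2 + c₄)
    (a : ℝ) (ha : 0 < a) (u v : Fin d → ℝ) :
    (∫ ω, sampleCov (proj a (B ω) u) (proj a (B ω) v)
        = c₂ ^ 2 * a ^ 2 * k * (((d : ℝ) + k) * sampleCov u v
            + d * (sampleMean u * sampleMean v)
            + (c₄ / c₂ ^ 2) * (1 - 1 / d)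
              * (sampleCov u v + (d / ((d : ℝ) - 1)) * (sampleMean u * sampleMean v))))
    ∧ (sampleMean u = 0 → sampleMean v = 0 →
        a = 1 / Real.sqrt (c₂ ^ 2 * k * ((d : ℝ) + k + (c₄ / c₂ ^ 2) * (1 - 1 / d))) →
        ∫ ω, sampleCov (proj a (B ω) u) (proj a (B ω) v) = sampleCov u v) := by
  classical
  have hd0 : (d:ℝ) ≠ 0 := by
    have : (2:ℝ) ≤ d := by exact_mod_cast hd
    nlinarith
  have hd1 : (d:ℝ) - 1 ≠ 0 := by
    have : (2:ℝ) ≤ d := by exact_mod_cast hd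
    nlinarith
  have hc2 : c₂ ≠ 0 := ne_of_gt hc₂
  have hmeas' : ∀ i : Fin k × Fin d, Measurable (fun ω => B ω i.1 i.2) := fun i => hmeas i.1 i.2
  have hL4' : ∀ i : Fin k × Fin d, MemLp (fun ω => B ω i.1 i.2) 4 ℙ := fun i => hL4 i.1 i.2
  have hM : ∀ p q r s : Fin k × Fin d,
      ∫ ω, B ω p.1 p.2 * B ω q.1 q.2 * B ω r.1 r.2 * B ω s.1 s.2 =
      c₂^2 * ((if p = q then (1:ℝ) else 0) * (if r = s then 1 else 0)
        + (if p = r then (1:ℝ) else 0) * (if q = s then 1 else 0)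
        + (if p = s then (1:ℝ) else 0) * (if q = r then 1 else 0))
      + c₄ * ((if p = q then (1:ℝ) else 0) * (if p = r then 1 else 0) * (if p = s then 1 else 0)) :=
    fun p q r s => aux19_fourMoment (fun i ω => B ω i.1 i.2) hmeas' hindep hL4' c₂ c₄
      (fun i => hmean i.1 i.2) (fun i => hvar i.1 i.2) (fun i => hfour i.1 i.2) p q r s
  have hint4 : ∀ (c : ℝ) (p q r s : Fin k × Fin d),
      Integrable (fun ω => c * (B ω p.1 p.2 * B ω q.1 q.2 * B ω r.1 r.2 * B ω s.1 s.2)) ℙ := by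
    intro c p q r s
    have h := (aux19_int_mul4 (fun i ω => B ω i.1 i.2) hL4' p q r s).const_mul c
    have e : (fun ω => c * (B ω p.1 p.2 * B ω q.1 q.2 * (B ω r.1 r.2 * B ω s.1 s.2)))
        = fun ω => c * (B ω p.1 p.2 * B ω q.1 q.2 * B ω r.1 r.2 * B ω s.1 s.2) :=
      funext fun ω => by ring
    rw [← e]
    exact h
  have hxA : (fun ω => ∑ m, proj a (B ω) u m * proj a (B ω) v m)
      = fun ω => ∑ m : Fin d, ∑ p : Fin k × Fin d, ∑ p' : Fin k × Fin d,
          (a * u p.2 * (a * v p'.2)) *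
            (B ω p.1 m * B ω p.1 p.2 * B ω p'.1 m * B ω p'.1 p'.2) := by
    funext ω
    refine Finset.sum_congr rfl fun m _ => ?_
    rw [aux19_proj_apply, aux19_proj_apply, Finset.sum_mul_sum]
    exact Finset.sum_congr rfl fun p _ => Finset.sum_congr rfl fun p' _ => by ring
  have hxB : (fun ω => (∑ m, proj a (B ω) u m) * (∑ m, proj a (B ω) v m))
      = fun ω => ∑ m : Fin d, ∑ m' : Fin d, ∑ p : Fin k × Fin d, ∑ p' : Fin k × Fin d,
          (a * u p.2 * (a * v p'.2)) *
            (B ω p.1 m * B ω p.1 p.2 * B ω p'.1 m' * B ω p'.1 p'.2) := by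
    funext ω
    rw [Finset.sum_mul_sum]
    refine Finset.sum_congr rfl fun m _ => Finset.sum_congr rfl fun m' _ => ?_
    rw [aux19_proj_apply, aux19_proj_apply, Finset.sum_mul_sum]
    exact Finset.sum_congr rfl fun p _ => Finset.sum_congr rfl fun p' _ => by ring
  have hIntA : Integrable (fun ω => ∑ m, proj a (B ω) u m * proj a (B ω) v m) ℙ := by
    rw [hxA]
    exact integrable_finset_sum _ (fun m _ => integrable_finset_sum _ (fun p _ =>
      integrable_finset_sum _ (fun p' _ => hint4 (a * u p.2 * (a * v p'.2)) (p.1, m) p ((p'.1, m)) p')))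
  have hIntB : Integrable (fun ω => (∑ m, proj a (B ω) u m) * (∑ m, proj a (B ω) v m)) ℙ := by
    rw [hxB]
    exact integrable_finset_sum _ (fun m _ => integrable_finset_sum _ (fun m' _ =>
      integrable_finset_sum _ (fun p _ => integrable_finset_sum _ (fun p' _ => hint4 (a * u p.2 * (a * v p'.2)) (p.1, m) p ((p'.1, m')) p'))))
  have hA : ∫ ω, (∑ m, proj a (B ω) u m * proj a (B ω) v m)
      = a^2 * ((c₂^2*((k:ℝ)^2 + k*d + k) + c₄*k) * (∑ n, u n * v n)) := by
    rw [hxA, integral_finset_sum _ (fun m _ => integrable_finset_sum _ (fun p _ =>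
      integrable_finset_sum _ (fun p' _ => hint4 (a * u p.2 * (a * v p'.2)) (p.1, m) p ((p'.1, m)) p')))]
    refine Eq.trans (Finset.sum_congr rfl fun m _ => ?_) (aux19_sumA a c₂ c₄ u v)
    rw [integral_finset_sum _ (fun p _ => integrable_finset_sum _ (fun p' _ => hint4 (a * u p.2 * (a * v p'.2)) (p.1, m) p ((p'.1, m)) p'))]
    refine Finset.sum_congr rfl fun p _ => ?_
    rw [integral_finset_sum _ (fun p' _ => hint4 (a * u p.2 * (a * v p'.2)) (p.1, m) p ((p'.1, m)) p')]
    refine Finset.sum_congr rfl fun p' _ => ?_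
    rw [integral_const_mul]
    exact congrArg (fun z => (a * u p.2 * (a * v p'.2)) * z) (hM (p.1, m) p (p'.1, m) p')
  have hB : ∫ ω, ((∑ m, proj a (B ω) u m) * (∑ m, proj a (B ω) v m))
      = a^2 * (c₂^2*((k:ℝ)^2 + k) * ((∑ n, u n) * (∑ n, v n))
          + (c₂^2*k*d + c₄*k) * (∑ n, u n * v n)) := by
    rw [hxB, integral_finset_sum _ (fun m _ => integrable_finset_sum _ (fun m' _ =>
      integrable_finset_sum _ (fun p _ => integrable_finset_sum _ (fun p' _ => hint4 (a * u p.2 * (a * v p'.2)) (p.1, m) p ((p'.1, m')) p'))))]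
    refine Eq.trans (Finset.sum_congr rfl fun m _ => ?_) (aux19_sumB a c₂ c₄ u v)
    rw [integral_finset_sum _ (fun m' _ => integrable_finset_sum _ (fun p _ =>
      integrable_finset_sum _ (fun p' _ => hint4 (a * u p.2 * (a * v p'.2)) (p.1, m) p ((p'.1, m')) p')))]
    refine Finset.sum_congr rfl fun m' _ => ?_
    rw [integral_finset_sum _ (fun p _ => integrable_finset_sum _ (fun p' _ => hint4 (a * u p.2 * (a * v p'.2)) (p.1, m) p ((p'.1, m')) p'))]
    refine Finset.sum_congr rfl fun p _ => ?_
    rw [integral_finset_sum _ (fun p' _ => hint4 (a * u p.2 * (a * v p'.2)) (p.1, m) p ((p'.1, m')) p')]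
    refine Finset.sum_congr rfl fun p' _ => ?_
    rw [integral_const_mul]
    exact congrArg (fun z => (a * u p.2 * (a * v p'.2)) * z) (hM (p.1, m) p (p'.1, m') p')
  have key : ∫ ω, sampleCov (proj a (B ω) u) (proj a (B ω) v)
      = c₂ ^ 2 * a ^ 2 * k * (((d : ℝ) + k) * sampleCov u v
          + d * (sampleMean u * sampleMean v)
          + (c₄ / c₂ ^ 2) * (1 - 1 / d)
            * (sampleCov u v + (d / ((d : ℝ) - 1)) * (sampleMean u * sampleMean v))) := by
    have hsc : (fun ω => sampleCov (proj a (B ω) u) (proj a (B ω) v))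
        = fun ω => (1/((d:ℝ)-1)) * (∑ m, proj a (B ω) u m * proj a (B ω) v m)
          - (1/(((d:ℝ)-1)*(d:ℝ))) * ((∑ m, proj a (B ω) u m) * (∑ m, proj a (B ω) v m)) :=
      funext fun ω => aux19_sampleCov_eq hd0 hd1 _ _
    rw [hsc, integral_sub (hIntA.const_mul _) (hIntB.const_mul _),
      integral_const_mul, integral_const_mul, hA, hB,
      aux19_sampleCov_eq hd0 hd1 u v]
    simp only [sampleMean]
    field_simp
    ring
  refine ⟨key, fun hu hv haeq => ?_⟩
  rw [key, hu, hv]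
  have hst : Real.sqrt (c₂ ^ 2 * k * ((d : ℝ) + k + (c₄ / c₂ ^ 2) * (1 - 1 / d))) ≠ 0 := by
    intro h0
    rw [haeq] at ha
    rw [h0, div_zero] at ha
    exact lt_irrefl 0 ha
  have ht : 0 < c₂ ^ 2 * (k:ℝ) * ((d : ℝ) + k + (c₄ / c₂ ^ 2) * (1 - 1 / d)) := by
    by_contra hcon
    push_neg at hcon
    exact hst (Real.sqrt_eq_zero'.mpr hcon)
  have ha2 : a ^ 2 * (c₂ ^ 2 * (k:ℝ) * ((d : ℝ) + k + (c₄ / c₂ ^ 2) * (1 - 1 / d))) = 1 := by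
    rw [haeq, div_pow, one_pow, Real.sq_sqrt ht.le]
    exact one_div_mul_cancel (ne_of_gt ht)
  linear_combination (sampleCov u v) * ha2
end
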